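/- Let k be an infinite field of prime characteristic p, G a group acting linearly and rationally on a finite-dimensional k-vector space V, and v ∈ V^G a fixed point. Define ε(G, v) to be the infimum of all positive integers m such that there exists a G-invariant homogeneous polynomial of degree m not vanishing at v (infimum of the empty set being ∞). Then ε(G, v) is either ∞ or a power of p (including p⁰ = 1). -/

import Mathlib

open MvPolynomial

/-- The action of a linear automorphism `A` of `V = Fin n → K` on `K[V]`:
`f ↦ f ∘ A⁻¹`. -/
noncomputable def polyAct {K : Type*} [Field K] {n : ℕ}
    (A : (Fin n → K) ≃ₗ[K] (Fin n → K)) (f : MvPolynomial (Fin n) K) :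
    MvPolynomial (Fin n) K :=
  aeval (fun i => ∑ j, C (A.symm (Pi.single j 1) i) * X j) f

lemma lucasAux (p : ℕ) (hp : p.Prime) (r d : ℕ) :
    Nat.choose (p ^ r * d) (p ^ r) ≡ d [MOD p] := by
  haveI : Fact p.Prime := ⟨hp⟩
  induction r with
  | zero => simp [Nat.ModEq.refl]
  | succ r ih =>
    have h := Choose.choose_modEq_choose_mod_mul_choose_div_nat
      (p := p) (n := p ^ (r + 1) * d) (k := p ^ (r + 1))
    have e1 : p ^ (r + 1) * d = p * (p ^ r * d) := by ring
    have e2 : p ^ (r + 1) = p * p ^ r := by ring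
    rw [show (p^(r+1)*d) % p = 0 by rw [e1]; exact Nat.mul_mod_right _ _,
      show (p^(r+1)) % p = 0 by rw [e2]; exact Nat.mul_mod_right _ _,
      show (p^(r+1)*d) / p = p ^ r * d by rw [e1]; exact Nat.mul_div_cancel_left _ hp.pos,
      show (p^(r+1)) / p = p ^ r by rw [e2]; exact Nat.mul_div_cancel_left _ hp.pos,
      Nat.choose_self, one_mul] at h
    exact h.trans ih

lemma aevalScale {K : Type*} [CommSemiring K] {n m : ℕ} {h : MvPolynomial (Fin n) K}
    (hh : h.IsHomogeneous m) (v : Fin n → K) (q : Polynomial K) :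
    aeval (fun j => Polynomial.C (v j) * q) h = Polynomial.C (eval v h) * q ^ m := by
  conv_lhs => rw [h.as_sum]
  conv_rhs => rw [h.as_sum]
  rw [map_sum, map_sum, map_sum, Finset.sum_mul]
  apply Finset.sum_congr rfl
  intro d hd
  have hdeg : ∑ i, d i = m := by
    have h2 := hh (MvPolynomial.mem_support_iff.mp hd)
    rw [Finsupp.weight_apply, Finsupp.sum_fintype] at h2
    · simpa using h2
    · simp
  rw [aeval_monomial, eval_monomial]
  rw [Finsupp.prod_pow, Finsupp.prod_pow]
  simp only [mul_pow, Finset.prod_mul_distrib, Finset.prod_pow_eq_pow_sum, hdeg]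
  simp only [Polynomial.algebraMap_eq, ← Polynomial.C_pow, ← map_prod, ← map_mul]
  rw [map_mul]; ring

section Act
variable {K : Type*} [Field K] {n : ℕ} (A : (Fin n → K) ≃ₗ[K] (Fin n → K))

lemma L_homog (i : Fin n) :
    (∑ j, C (A.symm (Pi.single j 1) i) * X j : MvPolynomial (Fin n) K).IsHomogeneous 1 :=
  IsHomogeneous.sum _ _ _ fun j _ => (isHomogeneous_X K j).C_mul _

lemma polyAct_homog {m : ℕ} {h : MvPolynomial (Fin n) K} (hh : h.IsHomogeneous m) :
    (polyAct A h).IsHomogeneous m := by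
  simpa [polyAct] using hh.aeval _ fun i => L_homog A i

-- invariance of shifted polynomial
lemma shift_invariant (v : Fin n → K) (hv : A.symm v = v)
    {f : MvPolynomial (Fin n) K} (hf : polyAct A f = f) :
    polyAct A (aeval (fun i => X i + C (v i)) f) = aeval (fun i => X i + C (v i)) f := by
  unfold polyAct at *
  rw [comp_aeval_apply]
  conv_rhs => rw [← hf, comp_aeval_apply]
  have hv2 : ∑ j, v j • A.symm (Pi.single j (1:K)) = v := by
    have h1 : ∑ j, v j • (Pi.single j (1:K) : Fin n → K) = v := by
      funext i
      rw [Finset.sum_apply]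
      simp [Pi.single_apply]
    calc ∑ j, v j • A.symm (Pi.single j (1:K))
        = A.symm (∑ j, v j • (Pi.single j (1:K) : Fin n → K)) := by
          rw [map_sum]; simp only [map_smul]
      _ = v := by rw [h1, hv]
  have hvi : ∀ i, ∑ j, A.symm (Pi.single j (1:K)) i * v j = v i := by
    intro i
    have h2 := congrFun hv2 i
    rw [Finset.sum_apply] at h2
    simp only [Pi.smul_apply, smul_eq_mul] at h2
    rw [← h2]
    exact Finset.sum_congr rfl fun j _ => mul_comm _ _
  have key : (fun i => (aeval fun i => ∑ j : Fin n, C (A.symm (Pi.single j 1) i) * X j)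
        ((X i : MvPolynomial (Fin n) K) + C (v i)))
      = fun i => (aeval fun i => (X i : MvPolynomial (Fin n) K) + C (v i))
        (∑ j : Fin n, C (A.symm (Pi.single j 1) i) * X j) := by
    funext i
    rw [map_add, aeval_X, aeval_C, map_sum]
    simp only [map_mul, aeval_C, aeval_X, algebraMap_eq, mul_add]
    rw [Finset.sum_add_distrib]
    congr 1
    simp only [← map_mul, ← map_sum, hvi i]
  rw [key]
end Act

lemma sum_hc_ext {K : Type*} [CommSemiring K] {σ : Type*} {F : MvPolynomial σ K} {N : ℕ}
    (hN : F.totalDegree < N) :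
    ∑ i ∈ Finset.range N, homogeneousComponent i F = F := by
  conv_rhs => rw [← sum_homogeneousComponent F]
  refine (Finset.sum_subset (Finset.range_subset_range.mpr hN) ?_).symm
  intro x hx hnx
  simp only [Finset.mem_range] at hx hnx
  apply homogeneousComponent_eq_zero; omega

lemma component_invariant {K : Type*} [Field K] {n : ℕ}
    (A : (Fin n → K) ≃ₗ[K] (Fin n → K)) {F : MvPolynomial (Fin n) K}
    (hF : polyAct A F = F) (k : ℕ) :
    polyAct A (homogeneousComponent k F) = homogeneousComponent k F := by
  set N := max (F.totalDegree + 1) (k + 1) with hN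
  have hkN : k ∈ Finset.range N := by simp [hN]
  have hsum : ∑ i ∈ Finset.range N, homogeneousComponent i F = F :=
    sum_hc_ext (Nat.lt_of_lt_of_le (Nat.lt_succ_self _) (le_max_left _ _))
  have h2 : ∑ i ∈ Finset.range N, polyAct A (homogeneousComponent i F) = F := by
    rw [show (∑ i ∈ Finset.range N, polyAct A (homogeneousComponent i F))
        = polyAct A (∑ i ∈ Finset.range N, homogeneousComponent i F) by
      unfold polyAct; rw [map_sum], hsum, hF]
  have h3 := congrArg (homogeneousComponent k) h2
  rw [map_sum] at h3
  have h4 : ∀ i ∈ Finset.range N,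
      homogeneousComponent k (polyAct A (homogeneousComponent i F))
      = if k = i then polyAct A (homogeneousComponent i F) else 0 := by
    intro i _
    rw [homogeneousComponent_of_mem
      ((mem_homogeneousSubmodule _ _).mpr
        (polyAct_homog A (homogeneousComponent_isHomogeneous i F)))]
  rw [Finset.sum_congr rfl h4, Finset.sum_ite_eq _ k, if_pos hkN] at h3
  exact h3


/-- For a fixed point `v ∈ V^G`, the minimal positive degree of a homogeneous
invariant not vanishing at `v` is a power of `p` (possibly `p⁰ = 1`), unless no
such invariant exists at all. -/
theorem stmt14 (p : ℕ) (hp : p.Prime) (K : Type*) [Field K] [CharP K p] [Infinite K]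
    (n : ℕ) (G : Type*) [Group G] (ρ : G →* ((Fin n → K) ≃ₗ[K] (Fin n → K)))
    (v : Fin n → K) (hfix : ∀ g, ρ g v = v)
    (S : Set ℕ)
    (hS : S = {m : ℕ | 0 < m ∧ ∃ f : MvPolynomial (Fin n) K,
      f.IsHomogeneous m ∧ (∀ g, polyAct (ρ g) f = f) ∧ eval v f ≠ 0}) :
    S = ∅ ∨ ∃ s : ℕ, sInf S = p ^ s := by
  by_cases hSe : S = ∅
  · exact Or.inl hSe
  right
  have hne : S.Nonempty := Set.nonempty_iff_ne_empty.mpr hSe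
  have hmS : sInf S ∈ S := Nat.sInf_mem hne
  set m := sInf S with hm
  rw [hS] at hmS
  obtain ⟨hm0, f, hfh, hfinv, hfv⟩ := hmS
  set r := m.factorization p with hr
  refine ⟨r, ?_⟩
  set d := m / p ^ r with hd
  have hmd : p ^ r * d = m := Nat.ordProj_mul_ordCompl_eq_self m p
  have hpd : ¬ p ∣ d := Nat.not_dvd_ordCompl hp hm0.ne'
  have hd1 : 1 ≤ d := Nat.one_le_iff_ne_zero.mpr (by rintro h; rw [h, mul_zero] at hmd; omega)
  set F := aeval (fun i => X i + C (v i)) f with hF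
  set g := homogeneousComponent (p ^ r) F with hg
  -- invariance
  have hAv : ∀ gg : G, (ρ gg).symm v = v :=
    fun gg => (LinearEquiv.symm_apply_eq _).mpr (hfix gg).symm
  have hFinv : ∀ gg, polyAct (ρ gg) F = F :=
    fun gg => shift_invariant _ v (hAv gg) (hfinv gg)
  have hginv : ∀ gg, polyAct (ρ gg) g = g :=
    fun gg => component_invariant _ (hFinv gg) _
  -- evaluation
  have h1 : aeval (fun i => Polynomial.C (v i) * Polynomial.X) F
      = Polynomial.C (eval v f) * (Polynomial.X + 1) ^ m := by
    rw [hF, comp_aeval_apply]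
    have e : (fun i => aeval (fun i => Polynomial.C (v i) * Polynomial.X)
          ((X i : MvPolynomial (Fin n) K) + C (v i)))
        = fun i => Polynomial.C (v i) * (Polynomial.X + 1) := by
      funext i
      rw [map_add, aeval_X, aeval_C, Polynomial.algebraMap_eq, mul_add, mul_one]
    rw [e, aevalScale hfh v (Polynomial.X + 1)]
  set N := max (F.totalDegree + 1) (p ^ r + 1) with hNdef
  have h2 : aeval (fun i => Polynomial.C (v i) * Polynomial.X) F
      = ∑ i ∈ Finset.range N, Polynomial.C (eval v (homogeneousComponent i F))
          * Polynomial.X ^ i := by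
    conv_lhs => rw [← sum_hc_ext (F := F) (N := N)
      (Nat.lt_of_lt_of_le (Nat.lt_succ_self _) (le_max_left _ _))]
    rw [map_sum]
    exact Finset.sum_congr rfl fun i _ =>
      aevalScale (homogeneousComponent_isHomogeneous i F) v Polynomial.X
  have hcoeff := congrArg (fun q => Polynomial.coeff q (p ^ r)) (h2.symm.trans h1)
  simp only [Polynomial.finset_sum_coeff, Polynomial.coeff_C_mul, Polynomial.coeff_X_pow,
    mul_ite, mul_one, mul_zero, Finset.sum_ite_eq _ (p ^ r),
    Polynomial.coeff_X_add_one_pow] at hcoeff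
  rw [if_pos (by simp [hNdef])] at hcoeff
  -- hcoeff : eval v g = eval v f * (m.choose (p^r) : K)
  have hch : Nat.choose m (p ^ r) ≡ d [MOD p] := by
    conv_lhs => rw [← hmd]
    exact lucasAux p hp r d
  have hchK : ((Nat.choose m (p ^ r) : K)) ≠ 0 := by
    intro h0
    rw [CharP.cast_eq_zero_iff K p] at h0
    exact hpd (Nat.modEq_zero_iff_dvd.mp (hch.symm.trans (Nat.modEq_zero_iff_dvd.mpr h0)))
  have hgv : eval v g ≠ 0 := by
    rw [hg, hcoeff]
    exact mul_ne_zero hfv hchK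
  have hprS : p ^ r ∈ S := by
    rw [hS]
    exact ⟨pow_pos hp.pos r, g, homogeneousComponent_isHomogeneous _ _, hginv, hgv⟩
  have h5 : sInf S ≤ p ^ r := Nat.sInf_le hprS
  have h6 : p ^ r ≤ m := by calc p ^ r = p ^ r * 1 := (mul_one _).symm
    _ ≤ p ^ r * d := Nat.mul_le_mul_left _ hd1
    _ = m := hmd
  omega
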